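/- Let ν be a valuation on K[x], let n ∈ ℕ be such that Ψ_n ≠ ∅ and {ν(Q) : Q ∈ Ψ_n} has no maximal element, and let Q_n be a limit key polynomial for Ψ_n. Then δ(Q) < δ(Q_n) for every Q ∈ Ψ_n, and consequently deg(Q_n) ≥ n. -/

import Mathlib

open Polynomial

/-- An additive valuation (possibly with nontrivial support) on a commutative
ring `R`, with values in `Γ ∪ {∞}`. -/
structure ValOn (R : Type*) [CommRing R] (Γ : Type*) [AddCommGroup Γ] [LinearOrder Γ] [IsOrderedAddMonoid Γ] where
  v : R → WithTop Γ
  v_zero : v 0 = ⊤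
  v_one : v 1 = 0
  v_mul : ∀ a b, v (a * b) = v a + v b
  min_le_v_add : ∀ a b, min (v a) (v b) ≤ v (a + b)

namespace ValOn

variable {R : Type*} [CommRing R] {Γ : Type*} [AddCommGroup Γ] [LinearOrder Γ] [IsOrderedAddMonoid Γ]

theorem v_neg (w : ValOn R Γ) (a : R) : w.v (-a) = w.v a := by
  have h1 : w.v (-1) + w.v (-1) = 0 := by
    rw [← w.v_mul]; norm_num [w.v_one]
  have h2 : w.v (-1) = 0 := by
    cases hx : w.v (-1) with
    | top => rw [hx] at h1; simp at h1
    | coe x =>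
        rw [hx, ← WithTop.coe_add, ← WithTop.coe_zero, WithTop.coe_inj] at h1
        have hx0 : x = 0 := by
          rcases lt_trichotomy x 0 with hc | hc | hc
          · exact absurd h1 (ne_of_lt (add_neg hc hc))
          · exact hc
          · exact absurd h1 (ne_of_gt (add_pos hc hc))
        rw [hx0, WithTop.coe_zero]
  calc w.v (-a) = w.v (-1 * a) := by rw [neg_one_mul]
  _ = w.v a := by rw [w.v_mul, h2, zero_add]

theorem le_v_sum (w : ValOn R Γ) {α : Type*} {γ : WithTop Γ} (s : Finset α) (h : α → R)
    (H : ∀ t ∈ s, γ ≤ w.v (h t)) : γ ≤ w.v (∑ t ∈ s, h t) := by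
  classical
  induction s using Finset.induction_on with
  | empty => simp [w.v_zero]
  | insert _ _ hx ih =>
      rw [Finset.sum_insert hx]
      refine le_trans ?_ (w.min_le_v_add _ _)
      rw [le_min_iff]
      exact ⟨H _ (Finset.mem_insert_self _ _),
        ih fun t ht => H t (Finset.mem_insert_of_mem ht)⟩

theorem lt_v_sum (w : ValOn R Γ) {α : Type*} {γ : WithTop Γ} (hγ : γ ≠ ⊤) (s : Finset α)
    (h : α → R) (H : ∀ t ∈ s, γ < w.v (h t)) : γ < w.v (∑ t ∈ s, h t) := by
  classical
  induction s using Finset.induction_on with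
  | empty => simp [w.v_zero]; exact lt_top_iff_ne_top.mpr hγ
  | insert _ _ hx ih =>
      rw [Finset.sum_insert hx]
      refine lt_of_lt_of_le ?_ (w.min_le_v_add _ _)
      rw [lt_min_iff]
      exact ⟨H _ (Finset.mem_insert_self _ _),
        ih fun t ht => H t (Finset.mem_insert_of_mem ht)⟩

/-- The subring `⊕_{γ ∈ Γ} P_γ` of the monoid algebra `R[Γ]`, where
`P_γ = {f : γ ≤ v f}`.  The graded ring `G_v = ⊕_γ P_γ/P_γ⁺` is realized below as the
quotient of this subring by the ideal `⊕_γ P_γ⁺`. -/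
def gradedCarrier (w : ValOn R Γ) : Subring (AddMonoidAlgebra R Γ) where
  carrier := {s | ∀ γ : Γ, (γ : WithTop Γ) ≤ w.v (s.coeff γ)}
  zero_mem' := by intro γ; simp [w.v_zero]
  one_mem' := by
    intro γ
    classical
    show (γ : WithTop Γ) ≤ w.v ((AddMonoidAlgebra.single (0:Γ) (1:R)).coeff γ)
    rw [AddMonoidAlgebra.coeff_single_apply]
    split_ifs with h
    · subst h; simp [w.v_one]
    · simp [w.v_zero]
  add_mem' := by
    intro a b ha hb γ
    refine le_trans ?_ (w.min_le_v_add _ _)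
    exact le_min (ha γ) (hb γ)
  neg_mem' := by
    intro a ha γ
    show (γ : WithTop Γ) ≤ w.v ((-a).coeff γ)
    rw [AddMonoidAlgebra.coeff_neg, Finsupp.neg_apply, w.v_neg]
    exact ha γ
  mul_mem' := by
    classical
    intro a b ha hb γ
    rw [AddMonoidAlgebra.coeff_mul]
    rw [Finsupp.sum]
    refine w.le_v_sum _ _ (fun α hα => ?_)
    rw [Finsupp.sum]
    refine w.le_v_sum _ _ (fun β hβ => ?_)
    split_ifs with h
    · subst h
      rw [w.v_mul, WithTop.coe_add]
      exact add_le_add (ha α) (hb β)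
    · simp [w.v_zero]

/-- The ideal `⊕_{γ ∈ Γ} P_γ⁺` of `gradedCarrier w`. -/
def gradedIdeal (w : ValOn R Γ) : Ideal (gradedCarrier w) where
  carrier := {s | ∀ γ : Γ, (γ : WithTop Γ) < w.v ((s : AddMonoidAlgebra R Γ).coeff γ)}
  zero_mem' := by intro γ; simp [w.v_zero]
  add_mem' := by
    intro a b ha hb γ
    refine lt_of_lt_of_le ?_ (w.min_le_v_add _ _)
    exact lt_min (ha γ) (hb γ)
  smul_mem' := by
    classical
    intro c x hx γ
    rw [smul_eq_mul]
    show (γ : WithTop Γ) < w.v (((c : AddMonoidAlgebra R Γ) * (x : AddMonoidAlgebra R Γ)).coeff γ)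
    rw [AddMonoidAlgebra.coeff_mul, Finsupp.sum]
    refine w.lt_v_sum (WithTop.coe_ne_top) _ _ (fun α hα => ?_)
    rw [Finsupp.sum]
    refine w.lt_v_sum (WithTop.coe_ne_top) _ _ (fun β hβ => ?_)
    split_ifs with h
    · subst h
      rw [w.v_mul, WithTop.coe_add]
      exact WithTop.add_lt_add_of_le_of_lt WithTop.coe_ne_top (c.2 α) (hx β)
    · simp [w.v_zero]
end ValOn

/-- The graded ring `G_w = ⊕_{γ} P_γ/P_γ⁺` associated to the valuation `w`,
realized as a quotient. -/
abbrev Graded {R : Type*} [CommRing R] {Γ : Type*} [AddCommGroup Γ] [LinearOrder Γ] [IsOrderedAddMonoid Γ]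
    (w : ValOn R Γ) : Type _ :=
  (ValOn.gradedCarrier w) ⧸ (ValOn.gradedIdeal w)

namespace ValOn

variable {R : Type*} [CommRing R] {Γ : Type*} [AddCommGroup Γ] [LinearOrder Γ] [IsOrderedAddMonoid Γ]

/-- `inv_w f`, the initial form (image of `f` in the homogeneous component
`P_{v f}/P_{v f}⁺` of the graded ring), with `inv_w f = 0` when `f ∈ supp w`. -/
noncomputable def initialForm (w : ValOn R Γ) (f : R) : Graded w :=
  if h : w.v f = ⊤ then 0
  else Ideal.Quotient.mk (gradedIdeal w)
    ⟨AddMonoidAlgebra.single ((w.v f).untop h) f, by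
      intro γ
      classical
      show (γ : WithTop Γ) ≤ w.v ((AddMonoidAlgebra.single ((w.v f).untop h) f).coeff γ)
      rw [AddMonoidAlgebra.coeff_single_apply]
      split_ifs with hh
      · rw [← hh, WithTop.coe_untop]
      · simp [w.v_zero]⟩

theorem gradedCarrier_mono {w₁ w₂ : ValOn R Γ} (h : ∀ f, w₁.v f ≤ w₂.v f) :
    gradedCarrier w₁ ≤ gradedCarrier w₂ :=
  fun s hs γ => (hs γ).trans (h _)

/-- The homomorphism `φ : G_{w₁} → G_{w₂}` of graded rings, for `w₁ ≤ w₂`: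
it sends `inv_{w₁} f` to `inv_{w₂} f` if `w₁ f = w₂ f` and to `0` if `w₁ f < w₂ f`. -/
noncomputable def phi (w₁ w₂ : ValOn R Γ) (h : ∀ f, w₁.v f ≤ w₂.v f) :
    Graded w₁ →+* Graded w₂ :=
  Ideal.Quotient.lift (gradedIdeal w₁)
    ((Ideal.Quotient.mk (gradedIdeal w₂)).comp (Subring.inclusion (gradedCarrier_mono h)))
    (by
      intro a ha
      rw [RingHom.comp_apply, Ideal.Quotient.eq_zero_iff_mem]
      exact fun γ => lt_of_lt_of_le (ha γ) (h _))

end ValOn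


open ValOn

section PolyDefs

variable {K : Type*} [Field K] {Γ : Type*} [AddCommGroup Γ] [LinearOrder Γ] [IsOrderedAddMonoid Γ]

/-- A polynomial `f` is `𝔳`-stable for a family `𝔳 = (ν_i)_{i ∈ I}` if the values `ν_i(f)`
eventually stabilize. -/
def Stable {I : Type*} [Preorder I] (ν : I → ValOn (Polynomial K) Γ) (f : Polynomial K) : Prop :=
  ∃ i : I, ∀ j : I, i ≤ j → (ν j).v f = (ν i).v f

/-- The truncation `w_q` of `w` at `q`:
`w_q(f) = min_j w(f_j q^j)` where `f = ∑ f_j q^j` is the `q`-expansion of `f`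
(for monic non-constant `q`, the `j`-th coefficient of the `q`-expansion is
`(f /ₘ q^j) %ₘ q`, and all the nonzero coefficients occur for `j ≤ natDegree f`). -/
noncomputable def truncVal (w : ValOn (Polynomial K) Γ) (q f : Polynomial K) : WithTop Γ :=
  (Finset.range (f.natDegree + 1)).inf' Finset.nonempty_range_add_one
    (fun j => w.v (((f /ₘ q ^ j) %ₘ q) * q ^ j))

/-- `δ(f) = max {ν̄(x - a) : a a root of f}` for a polynomial over an algebraically closed
field, with the convention `δ(f) = ⊥ = -∞` when `f` has no roots (e.g. `deg f = 0`). -/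
noncomputable def deltaOf {F : Type*} [Field F] (wbar : ValOn (Polynomial F) Γ)
    (f : Polynomial F) : WithBot (WithTop Γ) :=
  (f.roots.map (fun a => ((wbar.v (X - C a) : WithTop Γ) : WithBot (WithTop Γ)))).sup

/-- `δ(f)` of `f ∈ K[x]`, computed via the fixed extension `ν̄` of `ν` to `K̄[x]`. -/
noncomputable def delta (wbar : ValOn (Polynomial (AlgebraicClosure K)) Γ)
    (f : Polynomial K) : WithBot (WithTop Γ) :=
  deltaOf wbar (f.map (algebraMap K (AlgebraicClosure K)))

/-- `Q` is a key polynomial (of level `δ(Q)`) for the valuation `ν` (with fixed extension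
`ν̄` to `K̄[x]`): `Q` is monic and `δ(f) ≥ δ(Q) → deg f ≥ deg Q` for every nonzero `f`. -/
def IsKeyPoly (wbar : ValOn (Polynomial (AlgebraicClosure K)) Γ) (Q : Polynomial K) : Prop :=
  Q.Monic ∧ ∀ f : Polynomial K, f ≠ 0 → delta wbar Q ≤ delta wbar f → Q.degree ≤ f.degree

/-- `Ψ_n`: the set of key polynomials of degree `n`. -/
def Psi (wbar : ValOn (Polynomial (AlgebraicClosure K)) Γ) (n : ℕ) : Set (Polynomial K) :=
  {Q | IsKeyPoly wbar Q ∧ Q.natDegree = n}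

/-- The set `K_n = {f : ν_Q(f) < ν(f) for all Q ∈ Ψ_n}`. -/
def LimitSet (w : ValOn (Polynomial K) Γ) (wbar : ValOn (Polynomial (AlgebraicClosure K)) Γ)
    (n : ℕ) : Set (Polynomial K) :=
  {f | ∀ Q ∈ Psi wbar n, truncVal w Q f < w.v f}

/-- A limit key polynomial for `Ψ_n`: a monic polynomial in `K_n` of least degree. -/
def IsLimitKeyPoly (w : ValOn (Polynomial K) Γ)
    (wbar : ValOn (Polynomial (AlgebraicClosure K)) Γ) (n : ℕ) (Qn : Polynomial K) : Prop :=
  Qn.Monic ∧ Qn ∈ LimitSet w wbar n ∧ ∀ g ∈ LimitSet w wbar n, Qn.degree ≤ g.degree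

/-- `g` is `𝔳`-stable for the family `𝔳 = (ν_Q)_{Q ∈ Ψ_n}`, ordered by `Q ⪯ Q' ↔ ν_Q ≤ ν_{Q'}`. -/
def PsiStable (w : ValOn (Polynomial K) Γ) (wbar : ValOn (Polynomial (AlgebraicClosure K)) Γ)
    (n : ℕ) (g : Polynomial K) : Prop :=
  ∃ Q ∈ Psi wbar n, ∀ Q' ∈ Psi wbar n,
    (∀ h : Polynomial K, truncVal w Q h ≤ truncVal w Q' h) → truncVal w Q' g = truncVal w Q g

/-- `v` is a Krull valuation: its support is trivial. -/
def IsKrullVal (v : Polynomial K → WithTop Γ) : Prop :=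
  ∀ f : Polynomial K, f ≠ 0 → v f ≠ ⊤

/-- The quotient group `v(K[x])/ν₀K` is a torsion group: every value of `v` has a positive
multiple lying in the value group of `ν₀`. -/
def TorsionOverBase (ν₀ : ValOn K Γ) (v : Polynomial K → WithTop Γ) : Prop :=
  ∀ f : Polynomial K, f ≠ 0 → ∃ m : ℕ, 0 < m ∧ ∃ a : K, a ≠ 0 ∧ m • v f = ν₀.v a

/-- `v` (a valuation on `K[x]` extending `ν₀`) is residue-transcendental: it is Krull and the
residue field extension `K(x)v ∣ Kν₀` is transcendental, i.e. there are `f, g` with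
`v f = v g` whose residue `res(f/g)` is transcendental over `Kν₀`: every polynomial over
`Kν₀` (with coefficients `res(c_i)`, not all zero) does not vanish at `res(f/g)`. -/
def ResidueTranscendental (ν₀ : ValOn K Γ) (v : Polynomial K → WithTop Γ) : Prop :=
  IsKrullVal v ∧ ∃ f g : Polynomial K, f ≠ 0 ∧ g ≠ 0 ∧ v f = v g ∧
    ∀ (n : ℕ) (c : ℕ → K), (∀ i, 0 ≤ ν₀.v (c i)) → (∃ i, i ≤ n ∧ ν₀.v (c i) = 0) →
      v (∑ i ∈ Finset.range (n + 1), Polynomial.C (c i) * f ^ i * g ^ (n - i)) = v (g ^ n)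

/-- `v` is value-transcendental: it is not Krull, or `v(K[x])/ν₀K` is not torsion. -/
def ValueTranscendental (ν₀ : ValOn K Γ) (v : Polynomial K → WithTop Γ) : Prop :=
  ¬ IsKrullVal v ∨ ¬ TorsionOverBase ν₀ v

/-- `v` is valuation-transcendental. -/
def ValuationTranscendental (ν₀ : ValOn K Γ) (v : Polynomial K → WithTop Γ) : Prop :=
  ValueTranscendental ν₀ v ∨ ResidueTranscendental ν₀ v

/-- `v` is valuation-algebraic. -/
def ValuationAlgebraic (ν₀ : ValOn K Γ) (v : Polynomial K → WithTop Γ) : Prop :=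
  ¬ ValuationTranscendental ν₀ v

end PolyDefs

section Aux

namespace ValOn

variable {R : Type*} [CommRing R] {Γ : Type*} [AddCommGroup Γ] [LinearOrder Γ] [IsOrderedAddMonoid Γ]

theorem v_pow (w : ValOn R Γ) (a : R) (n : ℕ) : w.v (a ^ n) = n • w.v a := by
  induction n with
  | zero => simpa using w.v_one
  | succ n ih => rw [pow_succ, w.v_mul, ih, succ_nsmul]

theorem v_multisetProd (w : ValOn R Γ) (s : Multiset R) :
    w.v s.prod = (s.map w.v).sum := by
  induction s using Multiset.induction_on with
  | empty => simpa using w.v_one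
  | cons a s ih => rw [Multiset.prod_cons, w.v_mul, Multiset.map_cons, Multiset.sum_cons, ih]

theorem v_add_eq_left (w : ValOn R Γ) {a b : R} (h : w.v a < w.v b) :
    w.v (a + b) = w.v a := by
  refine le_antisymm ?_ (le_trans (le_min le_rfl h.le) (w.min_le_v_add a b))
  have key : min (w.v (a + b)) (w.v b) ≤ w.v a := by
    have : a = (a + b) + (-b) := by ring
    calc min (w.v (a + b)) (w.v b) = min (w.v (a + b)) (w.v (-b)) := by rw [w.v_neg]
      _ ≤ w.v ((a + b) + (-b)) := w.min_le_v_add _ _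
      _ = w.v a := by rw [← this]
  by_contra hlt
  push_neg at hlt
  exact absurd key (not_le.mpr (lt_min hlt h))

end ValOn

namespace KeyAux

open ValOn Finset

variable {F : Type*} [Field F] {Γ : Type*} [AddCommGroup Γ] [LinearOrder Γ] [IsOrderedAddMonoid Γ]

/-- Helper: sum of a multiset map is monotone. -/
theorem msum_le {α : Type*} (s : Multiset α) (f g : α → WithTop Γ)
    (h : ∀ x ∈ s, f x ≤ g x) : (s.map f).sum ≤ (s.map g).sum := by
  induction s using Multiset.induction_on with
  | empty => simp
  | cons a s ih =>
      simp only [Multiset.map_cons, Multiset.sum_cons]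
      exact add_le_add (h a (Multiset.mem_cons_self a s))
        (ih fun x hx => h x (Multiset.mem_cons_of_mem hx))

/-- A nonempty multiset in a linear order with bot attains its sup. -/
theorem sup_mem {α : Type*} [LinearOrder α] [OrderBot α] {s : Multiset α} (hs : s ≠ 0) :
    s.sup ∈ s := by
  induction s using Multiset.induction_on with
  | empty => exact absurd rfl hs
  | cons a s ih =>
      rw [Multiset.sup_cons]
      rcases eq_or_ne s 0 with h0 | h0
      · subst h0; simp
      · rcases le_total a s.sup with h | h
        · rw [sup_eq_right.mpr h]; exact Multiset.mem_cons_of_mem (ih h0)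
        · rw [sup_eq_left.mpr h]; exact Multiset.mem_cons_self a s

/-- The `j`-th "Gauss term" of a polynomial w.r.t. a valuation on constants and weight `δ`. -/
noncomputable def term (u : ValOn (Polynomial F) Γ) (δ : WithTop Γ) (p : Polynomial F)
    (j : ℕ) : WithTop Γ :=
  u.v (C (p.coeff j)) + j • δ

/-- The Gauss valuation (in the variable `X`). -/
noncomputable def mu' (u : ValOn (Polynomial F) Γ) (δ : WithTop Γ) (p : Polynomial F) :
    WithTop Γ :=
  (Finset.range (p.natDegree + 1)).inf' Finset.nonempty_range_add_one (term u δ p)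

variable (u : ValOn (Polynomial F) Γ) (δ : WithTop Γ)

theorem term_eq_top {p : Polynomial F} {j : ℕ} (h : p.natDegree < j) : term u δ p j = ⊤ := by
  rw [term, Polynomial.coeff_eq_zero_of_natDegree_lt h, map_zero, u.v_zero, top_add]

theorem mu'_le (p : Polynomial F) (j : ℕ) : mu' u δ p ≤ term u δ p j := by
  rcases le_or_gt j p.natDegree with h | h
  · exact Finset.inf'_le _ (Finset.mem_range_succ_iff.mpr h)
  · rw [term_eq_top u δ h]; exact le_top

theorem mu'_zero : mu' u δ 0 = ⊤ := by
  simp [mu', term, u.v_zero]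

theorem mu'_one : mu' u δ 1 = 0 := by
  simp [mu', term, u.v_one]

theorem mu'_C (c : F) : mu' u δ (C c) = u.v (C c) := by
  simp [mu', term]

theorem mu'_min_le_add (p q : Polynomial F) :
    min (mu' u δ p) (mu' u δ q) ≤ mu' u δ (p + q) := by
  refine Finset.le_inf' _ _ fun j hj => ?_
  calc min (mu' u δ p) (mu' u δ q) ≤ min (term u δ p j) (term u δ q j) :=
        min_le_min (mu'_le u δ p j) (mu'_le u δ q j)
    _ = min (u.v (C (p.coeff j))) (u.v (C (q.coeff j))) + j • δ := by
        rw [term, term, min_add_add_right]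
    _ ≤ u.v (C (p.coeff j) + C (q.coeff j)) + j • δ :=
        add_le_add_left (u.min_le_v_add _ _) _
    _ = term u δ (p + q) j := by rw [term, coeff_add, map_add]

theorem term_mul_pair (p q : Polynomial F) (j l : ℕ) :
    u.v (C (p.coeff j) * C (q.coeff l)) + (j + l) • δ = term u δ p j + term u δ q l := by
  rw [u.v_mul, term, term, add_nsmul, add_add_add_comm]

theorem mu'_add_le_mul (p q : Polynomial F) : mu' u δ p + mu' u δ q ≤ mu' u δ (p * q) := by
  classical
  refine Finset.le_inf' _ _ fun k hk => ?_
  have hco : C ((p * q).coeff k) =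
      ∑ x ∈ Finset.HasAntidiagonal.antidiagonal k, C (p.coeff x.1) * C (q.coeff x.2) := by
    rw [Polynomial.coeff_mul, map_sum]
    exact Finset.sum_congr rfl fun x _ => by rw [map_mul]
  have hne : (Finset.HasAntidiagonal.antidiagonal k).Nonempty := ⟨(0, k), by simp⟩
  set m := (Finset.HasAntidiagonal.antidiagonal k).inf' hne
      (fun x => u.v (C (p.coeff x.1) * C (q.coeff x.2))) with hm
  obtain ⟨x0, hx0mem, hx0⟩ := Finset.exists_mem_eq_inf' hne
      (fun x => u.v (C (p.coeff x.1) * C (q.coeff x.2)))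
  have hvm : m ≤ u.v (C ((p * q).coeff k)) := by
    rw [hco]
    exact u.le_v_sum _ _ fun x hx => Finset.inf'_le _ hx
  have hx0sum : x0.1 + x0.2 = k := Finset.HasAntidiagonal.mem_antidiagonal.mp hx0mem
  calc mu' u δ p + mu' u δ q ≤ term u δ p x0.1 + term u δ q x0.2 :=
        add_le_add (mu'_le u δ p x0.1) (mu'_le u δ q x0.2)
    _ = u.v (C (p.coeff x0.1) * C (q.coeff x0.2)) + (x0.1 + x0.2) • δ :=
        (term_mul_pair u δ p q x0.1 x0.2).symm
    _ = m + k • δ := by rw [← hx0, hx0sum]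
    _ ≤ u.v (C ((p * q).coeff k)) + k • δ := add_le_add_left hvm _
    _ = term u δ (p * q) k := rfl

theorem mu'_mul_le (p q : Polynomial F) : mu' u δ (p * q) ≤ mu' u δ p + mu' u δ q := by
  classical
  rcases eq_or_ne (mu' u δ p + mu' u δ q) ⊤ with htop | htop
  · rw [htop]; exact le_top
  have hp : mu' u δ p ≠ ⊤ := fun h => htop (by rw [h, top_add])
  have hq : mu' u δ q ≠ ⊤ := fun h => htop (by rw [h, add_top])
  have hexp : ∃ j, term u δ p j = mu' u δ p := by
    obtain ⟨j, -, hj⟩ := Finset.exists_mem_eq_inf' (Finset.nonempty_range_add_one) (term u δ p)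
    exact ⟨j, hj.symm⟩
  have hexq : ∃ l, term u δ q l = mu' u δ q := by
    obtain ⟨l, -, hl⟩ := Finset.exists_mem_eq_inf' (Finset.nonempty_range_add_one) (term u δ q)
    exact ⟨l, hl.symm⟩
  set j0 := Nat.find hexp with hj0def
  set l0 := Nat.find hexq with hl0def
  have hj0 : term u δ p j0 = mu' u δ p := Nat.find_spec hexp
  have hl0 : term u δ q l0 = mu' u δ q := Nat.find_spec hexq
  have hj0min : ∀ i < j0, mu' u δ p < term u δ p i := fun i hi =>
    lt_of_le_of_ne (mu'_le u δ p i) (fun h => Nat.find_min hexp hi h.symm)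
  have hl0min : ∀ i < l0, mu' u δ q < term u δ q i := fun i hi =>
    lt_of_le_of_ne (mu'_le u δ q i) (fun h => Nat.find_min hexq hi h.symm)
  set k0 := j0 + l0 with hk0def
  -- the main term
  set h : ℕ × ℕ → Polynomial F := fun x => C (p.coeff x.1) * C (q.coeff x.2) with hh
  have hx0mem : (j0, l0) ∈ Finset.HasAntidiagonal.antidiagonal k0 := Finset.HasAntidiagonal.mem_antidiagonal.mpr rfl
  have hmain : u.v (h (j0, l0)) + k0 • δ = mu' u δ p + mu' u δ q := by
    rw [hh]
    calc u.v (C (p.coeff j0) * C (q.coeff l0)) + (j0 + l0) • δ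
        = term u δ p j0 + term u δ q l0 := term_mul_pair u δ p q j0 l0
      _ = mu' u δ p + mu' u δ q := by rw [hj0, hl0]
  have hk0δ : k0 • δ ≠ ⊤ := by
    intro habs
    rw [habs, add_top] at hmain
    exact htop hmain.symm
  have hrest : ∀ x ∈ (Finset.HasAntidiagonal.antidiagonal k0).erase (j0, l0),
      mu' u δ p + mu' u δ q < u.v (h x) + k0 • δ := by
    intro x hx
    obtain ⟨hxne, hxmem⟩ := Finset.mem_erase.mp hx
    have hxsum : x.1 + x.2 = k0 := Finset.HasAntidiagonal.mem_antidiagonal.mp hxmem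
    have hterm : u.v (h x) + k0 • δ = term u δ p x.1 + term u δ q x.2 := by
      rw [hh, ← hxsum]; exact term_mul_pair u δ p q x.1 x.2
    rw [hterm]
    rcases lt_trichotomy x.1 j0 with h1 | h1 | h1
    · exact WithTop.add_lt_add_of_lt_of_le hq (hj0min x.1 h1) (mu'_le u δ q x.2)
    · exfalso; apply hxne
      have : x.2 = l0 := by omega
      exact Prod.ext h1 this
    · have h2 : x.2 < l0 := by omega
      exact WithTop.add_lt_add_of_le_of_lt hp (mu'_le u δ p x.1) (hl0min x.2 h2)
  -- value of the rest of the sum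
  set S := (Finset.HasAntidiagonal.antidiagonal k0).erase (j0, l0) with hS
  have hr : mu' u δ p + mu' u δ q < u.v (∑ x ∈ S, h x) + k0 • δ := by
    rcases S.eq_empty_or_nonempty with hSe | hSne
    · rw [hSe, Finset.sum_empty, u.v_zero, top_add]
      exact lt_top_iff_ne_top.mpr htop
    · obtain ⟨x1, hx1mem, hx1⟩ := Finset.exists_mem_eq_inf' hSne (fun x => u.v (h x))
      have : (S.inf' hSne fun x => u.v (h x)) ≤ u.v (∑ x ∈ S, h x) :=
        u.le_v_sum _ _ fun x hx => Finset.inf'_le _ hx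
      calc mu' u δ p + mu' u δ q < u.v (h x1) + k0 • δ := hrest x1 hx1mem
        _ = (S.inf' hSne fun x => u.v (h x)) + k0 • δ := by rw [← hx1]
        _ ≤ u.v (∑ x ∈ S, h x) + k0 • δ := add_le_add_left this _
  -- now compute the k0-th coefficient of p*q
  have hco : C ((p * q).coeff k0) = h (j0, l0) + ∑ x ∈ S, h x := by
    rw [Polynomial.coeff_mul, map_sum]
    have : ∀ x ∈ Finset.HasAntidiagonal.antidiagonal k0, C (p.coeff x.1 * q.coeff x.2) = h x :=
      fun x _ => by rw [hh, map_mul]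
    rw [Finset.sum_congr rfl this, (Finset.add_sum_erase _ h hx0mem)]
  have hlt : u.v (h (j0, l0)) < u.v (∑ x ∈ S, h x) := by
    have := hr
    rw [← hmain] at this
    exact (WithTop.add_lt_add_iff_right hk0δ).mp this
  have : u.v (C ((p * q).coeff k0)) = u.v (h (j0, l0)) := by
    rw [hco]; exact u.v_add_eq_left hlt
  calc mu' u δ (p * q) ≤ term u δ (p * q) k0 := mu'_le u δ _ k0
    _ = u.v (h (j0, l0)) + k0 • δ := by rw [term, this]
    _ = mu' u δ p + mu' u δ q := hmain

/-- Gauss valuation recentred at `a`. -/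
noncomputable def mu (a : F) (g : Polynomial F) : WithTop Γ := mu' u δ (g.comp (X + C a))

/-- The monomial valuation at the point `a` with weight `δ`. -/
noncomputable def muVal (a : F) : ValOn (Polynomial F) Γ where
  v := mu u δ a
  v_zero := by rw [mu, zero_comp]; exact mu'_zero u δ
  v_one := by rw [mu, one_comp]; exact mu'_one u δ
  v_mul p q := by
    rw [mu, mu, mu, mul_comp]
    exact le_antisymm (mu'_mul_le u δ _ _) (mu'_add_le_mul u δ _ _)
  min_le_v_add p q := by
    rw [mu, mu, mu, add_comp]
    exact mu'_min_le_add u δ _ _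

theorem muVal_v (a : F) (g : Polynomial F) :
    (muVal u δ a).v g = mu' u δ (g.comp (X + C a)) := rfl

theorem muVal_C (a : F) (c : F) : (muVal u δ a).v (C c) = u.v (C c) := by
  rw [muVal_v, C_comp, mu'_C]

theorem muVal_le_eval (a : F) (g : Polynomial F) :
    (muVal u δ a).v g ≤ u.v (C (g.eval a)) := by
  have h := mu'_le u δ (g.comp (X + C a)) 0
  have hc : (g.comp (X + C a)).coeff 0 = g.eval a := by
    rw [coeff_zero_eq_eval_zero, eval_comp]; simp
  rw [term, hc, zero_smul, add_zero] at h
  rw [muVal_v]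
  exact h

theorem mu'_X_add_C (c : F) : mu' u δ (X + C c) = min (u.v (C c)) δ := by
  have t0 : term u δ (X + C c) 0 = u.v (C c) := by
    simp [term]
  have t1 : term u δ (X + C c) 1 = δ := by
    simp [term, coeff_C, u.v_one]
  have h0 : mu' u δ (X + C c) ≤ u.v (C c) := le_trans (mu'_le u δ _ 0) (le_of_eq t0)
  have h1 : mu' u δ (X + C c) ≤ δ := le_trans (mu'_le u δ _ 1) (le_of_eq t1)
  refine le_antisymm (le_min h0 h1) ?_
  refine Finset.le_inf' _ _ fun j hj => ?_
  rw [natDegree_X_add_C] at hj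
  have hj2 : j < 2 := Finset.mem_range.mp hj
  interval_cases j
  · rw [t0]; exact min_le_left _ _
  · rw [t1]; exact min_le_right _ _

theorem muVal_linear (a b : F) :
    (muVal u δ a).v (X - C b) = min (u.v (C (a - b))) δ := by
  rw [muVal_v]
  have hc : (X - C b).comp (X + C a) = X + C (a - b) := by
    rw [sub_comp, X_comp, C_comp, map_sub]; ring
  rw [hc, mu'_X_add_C]

theorem vC_sub_ge (a b : F) : min (u.v (X - C a)) (u.v (X - C b)) ≤ u.v (C (a - b)) := by
  have hc : C (a - b) = (X - C b) + (-(X - C a)) := by rw [map_sub]; ring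
  rw [hc]
  calc min (u.v (X - C a)) (u.v (X - C b))
      = min (u.v (X - C b)) (u.v (-(X - C a))) := by rw [u.v_neg, min_comm]
    _ ≤ u.v ((X - C b) + (-(X - C a))) := u.min_le_v_add _ _

theorem vXb_ge (a b : F) : min (u.v (X - C a)) (u.v (C (a - b))) ≤ u.v (X - C b) := by
  have hc : X - C b = (X - C a) + C (a - b) := by rw [map_sub]; ring
  rw [hc]
  exact u.min_le_v_add _ _

theorem vC_sub_eq {a b : F} (hlt : u.v (X - C b) < u.v (X - C a)) :
    u.v (C (a - b)) = u.v (X - C b) := by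
  have h1 : u.v (X - C b) ≤ u.v (C (a - b)) := by
    have := vC_sub_ge u a b
    rwa [min_eq_right hlt.le] at this
  refine le_antisymm ?_ h1
  by_contra hgt
  push_neg at hgt
  exact absurd (vXb_ge u a b) (not_le.mpr (lt_min hlt hgt))

theorem muVal_linear_of_le {a b : F} (hle : u.v (X - C b) ≤ u.v (X - C a)) :
    (muVal u (u.v (X - C a)) a).v (X - C b) = u.v (X - C b) := by
  rw [muVal_linear]
  rcases lt_or_eq_of_le hle with hlt | heq
  · rw [vC_sub_eq u hlt]; exact min_eq_left hlt.le
  · have h2 : u.v (X - C a) ≤ u.v (C (a - b)) := by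
      have := vC_sub_ge u a b
      rwa [heq, min_self] at this
    rw [min_eq_right h2, heq]

theorem muVal_eq_v_of_roots_le [IsAlgClosed F] {a : F} {g : Polynomial F}
    (hroots : ∀ b ∈ g.roots, u.v (X - C b) ≤ u.v (X - C a)) :
    (muVal u (u.v (X - C a)) a).v g = u.v g := by
  rcases eq_or_ne g 0 with hg | hg
  · rw [hg, (muVal u (u.v (X - C a)) a).v_zero, u.v_zero]
  have e : g = C g.leadingCoeff * (g.roots.map fun b => X - C b).prod :=
    (IsAlgClosed.splits g).eq_prod_roots
  conv_lhs => rw [e]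
  conv_rhs => rw [e]
  rw [(muVal u (u.v (X - C a)) a).v_mul, u.v_mul,
    (muVal u (u.v (X - C a)) a).v_multisetProd, u.v_multisetProd, muVal_C,
    Multiset.map_map, Multiset.map_map]
  congr 1
  exact congrArg Multiset.sum (Multiset.map_congr rfl fun b hb =>
    muVal_linear_of_le u (hroots b hb))

theorem muVal_eq_eval_of_roots_lt [IsAlgClosed F] {a : F} {g : Polynomial F} (hg : g ≠ 0)
    (hroots : ∀ b ∈ g.roots, u.v (X - C b) < u.v (X - C a)) :
    (muVal u (u.v (X - C a)) a).v g = u.v (C (g.eval a)) := by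
  have e : g = C g.leadingCoeff * (g.roots.map fun b => X - C b).prod :=
    (IsAlgClosed.splits g).eq_prod_roots
  have h1 : g.eval a = g.leadingCoeff * (g.roots.map fun b => a - b).prod := by
    conv_lhs => rw [e]
    rw [eval_mul, eval_C, eval_multiset_prod, Multiset.map_map]
    congr 2
    exact Multiset.map_congr rfl fun b hb => by simp
  have h2 : C (g.eval a) = C g.leadingCoeff * (g.roots.map fun b => C (a - b)).prod := by
    rw [h1, map_mul, map_multiset_prod (C : F →+* Polynomial F), Multiset.map_map]
    rfl
  conv_lhs => rw [e]
  rw [h2, (muVal u (u.v (X - C a)) a).v_mul, u.v_mul,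
    (muVal u (u.v (X - C a)) a).v_multisetProd, u.v_multisetProd, muVal_C,
    Multiset.map_map, Multiset.map_map]
  congr 1
  refine congrArg Multiset.sum (Multiset.map_congr rfl fun b hb => ?_)
  show (muVal u (u.v (X - C a)) a).v (X - C b) = u.v (C (a - b))
  rw [muVal_linear, vC_sub_eq u (hroots b hb)]
  exact min_eq_left (hroots b hb).le

end KeyAux

end Aux

section MainAux

open KeyAux

variable {K : Type*} [Field K] {Γ : Type*} [AddCommGroup Γ] [LinearOrder Γ] [IsOrderedAddMonoid Γ]

theorem divByMonic_pow_succ (f Q : Polynomial K) (hQ : Q.Monic) (j : ℕ) :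
    f /ₘ Q ^ (j + 1) = (f /ₘ Q) /ₘ Q ^ j := by
  have hQj : (Q ^ j).Monic := hQ.pow j
  have hQj1 : (Q ^ (j + 1)).Monic := hQ.pow (j + 1)
  have hdegle : Q.degree ≤ (Q ^ (j + 1)).degree := by
    rw [degree_eq_natDegree hQ.ne_zero, degree_eq_natDegree hQj1.ne_zero,
      Polynomial.natDegree_pow]
    exact_mod_cast Nat.le_mul_of_pos_left _ (by omega)
  refine (div_modByMonic_unique ((f /ₘ Q) /ₘ Q ^ j)
      (Q * ((f /ₘ Q) %ₘ Q ^ j) + f %ₘ Q) hQj1 ⟨?_, ?_⟩).1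
  · have e1 := modByMonic_add_div f Q
    have e2 := modByMonic_add_div (f /ₘ Q) (Q ^ j)
    calc Q * ((f /ₘ Q) %ₘ Q ^ j) + f %ₘ Q + Q ^ (j + 1) * ((f /ₘ Q) /ₘ Q ^ j)
        = f %ₘ Q + Q * ((f /ₘ Q) %ₘ Q ^ j + Q ^ j * ((f /ₘ Q) /ₘ Q ^ j)) := by ring
      _ = f %ₘ Q + Q * (f /ₘ Q) := by rw [e2]
      _ = f := e1
  · refine lt_of_le_of_lt (degree_add_le _ _) (max_lt ?_ ?_)
    · by_cases hs : (f /ₘ Q) %ₘ Q ^ j = 0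
      · rw [hs, mul_zero, degree_zero]
        exact bot_lt_iff_ne_bot.mpr (fun h => hQj1.ne_zero (degree_eq_bot.mp h))
      · rw [degree_mul, pow_succ', degree_mul]
        refine WithBot.add_lt_add_left ?_ (degree_modByMonic_lt _ hQj)
        exact fun h => hQ.ne_zero (degree_eq_bot.mp h)
    · exact lt_of_lt_of_le (degree_modByMonic_lt f hQ) hdegle

theorem v_le_truncVal (w : ValOn (Polynomial K) Γ)
    (wbar : ValOn (Polynomial (AlgebraicClosure K)) Γ)
    (hbar : ∀ f : Polynomial K, wbar.v (f.map (algebraMap K (AlgebraicClosure K))) = w.v f)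
    {n : ℕ} (hn : 0 < n) {Q : Polynomial K} (hQ : Q ∈ Psi wbar n)
    (f : Polynomial K) (hf : delta wbar f ≤ delta wbar Q) :
    w.v f ≤ truncVal w Q f := by
  obtain ⟨⟨hQmonic, hQkey⟩, hQdeg⟩ := hQ
  set φ := algebraMap K (AlgebraicClosure K) with hφ
  have hQ0 : Q ≠ 0 := hQmonic.ne_zero
  have hQbmonic : (Q.map φ).Monic := hQmonic.map φ
  have hQb0 : Q.map φ ≠ 0 := hQbmonic.ne_zero
  have hQbdeg : (Q.map φ).natDegree = n := by rw [natDegree_map, hQdeg]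
  -- a root of Q of maximal value
  have hroots0 : (Q.map φ).roots ≠ 0 := by
    have hdeg : (Q.map φ).degree ≠ 0 := by
      rw [degree_eq_natDegree hQb0, hQbdeg]
      exact_mod_cast (by omega : n ≠ 0)
    obtain ⟨x, hx⟩ := IsAlgClosed.exists_root (Q.map φ) hdeg
    intro habs
    have hmem : x ∈ (Q.map φ).roots := mem_roots'.mpr ⟨hQb0, hx⟩
    rw [habs] at hmem
    exact Multiset.notMem_zero x hmem
  have hsupmem := KeyAux.sup_mem (s := (Q.map φ).roots.map
      (fun b => ((wbar.v (X - C b) : WithTop Γ) : WithBot (WithTop Γ))))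
      (by simpa [Multiset.map_eq_zero] using hroots0)
  obtain ⟨a, haroot, hasup⟩ := Multiset.mem_map.mp hsupmem
  have hdeltaQ : delta wbar Q = ((wbar.v (X - C a) : WithTop Γ) : WithBot (WithTop Γ)) := by
    rw [delta, deltaOf]; exact hasup.symm
  have hmax : ∀ b ∈ (Q.map φ).roots, wbar.v (X - C b) ≤ wbar.v (X - C a) := by
    intro b hb
    have hble : ((wbar.v (X - C b) : WithTop Γ) : WithBot (WithTop Γ)) ≤ delta wbar Q := by
      rw [delta, deltaOf]
      exact Multiset.le_sup (Multiset.mem_map_of_mem _ hb)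
    rw [hdeltaQ] at hble
    exact_mod_cast hble
  have haQ : (Q.map φ).eval a = 0 := (mem_roots'.mp haroot).2
  -- small degree polynomials have all roots of value < δ
  have hA : ∀ h : Polynomial K, h ≠ 0 → h.natDegree < n →
      ∀ b ∈ (h.map φ).roots, wbar.v (X - C b) < wbar.v (X - C a) := by
    intro h hh hdeg b hb
    have hdelta : delta wbar h < delta wbar Q := by
      by_contra hc
      push_neg at hc
      have hde := hQkey h hh hc
      have hnd := natDegree_le_natDegree hde
      omega
    have hble : ((wbar.v (X - C b) : WithTop Γ) : WithBot (WithTop Γ)) ≤ delta wbar h := by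
      rw [delta, deltaOf]
      exact Multiset.le_sup (Multiset.mem_map_of_mem _ hb)
    have hfin := lt_of_le_of_lt hble (lt_of_lt_of_le hdelta (le_of_eq hdeltaQ))
    exact_mod_cast hfin
  -- the bridge between w and the monomial valuation
  have hE1 : ∀ g : Polynomial K,
      (∀ b ∈ (g.map φ).roots, wbar.v (X - C b) ≤ wbar.v (X - C a)) →
      (KeyAux.muVal wbar (wbar.v (X - C a)) a).v (g.map φ) = w.v g := by
    intro g hg
    rw [KeyAux.muVal_eq_v_of_roots_le wbar hg, hbar]
  have hfroots : ∀ b ∈ (f.map φ).roots, wbar.v (X - C b) ≤ wbar.v (X - C a) := by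
    intro b hb
    have hble : ((wbar.v (X - C b) : WithTop Γ) : WithBot (WithTop Γ)) ≤ delta wbar f := by
      rw [delta, deltaOf]
      exact Multiset.le_sup (Multiset.mem_map_of_mem _ hb)
    have hfin := hble.trans (hf.trans (le_of_eq hdeltaQ))
    exact_mod_cast hfin
  -- the zeroth step of the induction
  have hstep0 : ∀ g : Polynomial K,
      (KeyAux.muVal wbar (wbar.v (X - C a)) a).v (g.map φ) ≤
      (KeyAux.muVal wbar (wbar.v (X - C a)) a).v ((g %ₘ Q).map φ) := by
    intro g
    by_cases hr : g %ₘ Q = 0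
    · rw [hr, Polynomial.map_zero, (KeyAux.muVal wbar (wbar.v (X - C a)) a).v_zero]
      exact le_top
    have hrdeg : (g %ₘ Q).natDegree < n := by
      have hlt := natDegree_lt_natDegree hr (degree_modByMonic_lt g hQmonic)
      omega
    have hrlt := hA _ hr hrdeg
    have heval : (g.map φ).eval a = ((g %ₘ Q).map φ).eval a := by
      conv_lhs => rw [← modByMonic_add_div g Q]
      rw [Polynomial.map_add, Polynomial.map_mul]
      simp [haQ]
    calc (KeyAux.muVal wbar (wbar.v (X - C a)) a).v (g.map φ)
        ≤ wbar.v (C ((g.map φ).eval a)) := KeyAux.muVal_le_eval wbar _ a _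
      _ = wbar.v (C (((g %ₘ Q).map φ).eval a)) := by rw [heval]
      _ = (KeyAux.muVal wbar (wbar.v (X - C a)) a).v ((g %ₘ Q).map φ) :=
          (KeyAux.muVal_eq_eval_of_roots_lt wbar (Polynomial.map_ne_zero hr) hrlt).symm
  -- the main induction: no cancellation in Q-expansions
  have hmain : ∀ N (g : Polynomial K), g.natDegree ≤ N → ∀ j,
      (KeyAux.muVal wbar (wbar.v (X - C a)) a).v (g.map φ) ≤
      (KeyAux.muVal wbar (wbar.v (X - C a)) a).v (((g /ₘ Q ^ j) %ₘ Q).map φ) +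
        j • (KeyAux.muVal wbar (wbar.v (X - C a)) a).v (Q.map φ) := by
    intro N
    induction N with
    | zero =>
        intro g hg j
        cases j with
        | zero =>
            rw [pow_zero, divByMonic_one, zero_smul, add_zero]
            exact hstep0 g
        | succ j =>
            have hgdeg : g.degree < (Q ^ (j + 1)).degree := by
              refine lt_of_lt_of_le ?_ (degree_le_of_dvd (dvd_pow_self Q (by omega))
                (hQmonic.pow (j + 1)).ne_zero)
              exact degree_lt_degree (by omega)
            rw [(divByMonic_eq_zero_iff (hQmonic.pow (j + 1))).mpr hgdeg, zero_modByMonic,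
              Polynomial.map_zero, (KeyAux.muVal wbar (wbar.v (X - C a)) a).v_zero, top_add]
            exact le_top
    | succ N ih =>
        intro g hg j
        cases j with
        | zero =>
            rw [pow_zero, divByMonic_one, zero_smul, add_zero]
            exact hstep0 g
        | succ j =>
            by_cases hgdeg : g.natDegree < n
            · have hgd : g.degree < (Q ^ (j + 1)).degree := by
                refine lt_of_lt_of_le ?_ (degree_le_of_dvd (dvd_pow_self Q (by omega))
                  (hQmonic.pow (j + 1)).ne_zero)
                exact degree_lt_degree (by omega)
              rw [(divByMonic_eq_zero_iff (hQmonic.pow (j + 1))).mpr hgd, zero_modByMonic,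
                Polynomial.map_zero, (KeyAux.muVal wbar (wbar.v (X - C a)) a).v_zero, top_add]
              exact le_top
            · push_neg at hgdeg
              have hdeg' : (g /ₘ Q).natDegree ≤ N := by
                rw [natDegree_divByMonic g hQmonic]
                omega
              have hrec := ih (g /ₘ Q) hdeg' j
              have hsplit : g /ₘ Q ^ (j + 1) = (g /ₘ Q) /ₘ Q ^ j :=
                divByMonic_pow_succ g Q hQmonic j
              have hQg : (KeyAux.muVal wbar (wbar.v (X - C a)) a).v (g.map φ) ≤
                  (KeyAux.muVal wbar (wbar.v (X - C a)) a).v ((Q * (g /ₘ Q)).map φ) := by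
                have hgg : (Q * (g /ₘ Q)).map φ = g.map φ + (-((g %ₘ Q).map φ)) := by
                  rw [← Polynomial.map_neg, ← Polynomial.map_add]
                  congr 1
                  linear_combination modByMonic_add_div g Q
                rw [hgg]
                refine le_trans (le_min le_rfl ?_)
                  ((KeyAux.muVal wbar (wbar.v (X - C a)) a).min_le_v_add _ _)
                rw [(KeyAux.muVal wbar (wbar.v (X - C a)) a).v_neg]
                exact hstep0 g
              calc (KeyAux.muVal wbar (wbar.v (X - C a)) a).v (g.map φ)
                  ≤ (KeyAux.muVal wbar (wbar.v (X - C a)) a).v ((Q * (g /ₘ Q)).map φ) := hQg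
                _ = (KeyAux.muVal wbar (wbar.v (X - C a)) a).v ((g /ₘ Q).map φ) +
                    (KeyAux.muVal wbar (wbar.v (X - C a)) a).v (Q.map φ) := by
                    rw [Polynomial.map_mul, (KeyAux.muVal wbar (wbar.v (X - C a)) a).v_mul,
                      add_comm]
                _ ≤ ((KeyAux.muVal wbar (wbar.v (X - C a)) a).v
                      ((((g /ₘ Q) /ₘ Q ^ j) %ₘ Q).map φ) +
                    j • (KeyAux.muVal wbar (wbar.v (X - C a)) a).v (Q.map φ)) +
                    (KeyAux.muVal wbar (wbar.v (X - C a)) a).v (Q.map φ) :=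
                    add_le_add_left hrec _
                _ = (KeyAux.muVal wbar (wbar.v (X - C a)) a).v
                      (((g /ₘ Q ^ (j + 1)) %ₘ Q).map φ) +
                    (j + 1) • (KeyAux.muVal wbar (wbar.v (X - C a)) a).v (Q.map φ) := by
                    rw [hsplit, succ_nsmul, add_assoc]
  -- conclusion
  rw [truncVal]
  refine Finset.le_inf' _ _ fun j hj => ?_
  have hterm : w.v ((f /ₘ Q ^ j) %ₘ Q * Q ^ j) = w.v ((f /ₘ Q ^ j) %ₘ Q) + j • w.v Q := by
    rw [w.v_mul, w.v_pow]
  have hfjval : w.v ((f /ₘ Q ^ j) %ₘ Q) =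
      (KeyAux.muVal wbar (wbar.v (X - C a)) a).v (((f /ₘ Q ^ j) %ₘ Q).map φ) := by
    by_cases hfj : (f /ₘ Q ^ j) %ₘ Q = 0
    · rw [hfj, Polynomial.map_zero, (KeyAux.muVal wbar (wbar.v (X - C a)) a).v_zero, w.v_zero]
    · have hfjdeg : ((f /ₘ Q ^ j) %ₘ Q).natDegree < n := by
        have hlt := natDegree_lt_natDegree hfj (degree_modByMonic_lt (f /ₘ Q ^ j) hQmonic)
        omega
      exact (hE1 _ (fun b hb => (hA _ hfj hfjdeg b hb).le)).symm
  have hQval : w.v Q = (KeyAux.muVal wbar (wbar.v (X - C a)) a).v (Q.map φ) :=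
    (hE1 Q hmax).symm
  have hfval : w.v f = (KeyAux.muVal wbar (wbar.v (X - C a)) a).v (f.map φ) :=
    (hE1 f hfroots).symm
  rw [hterm, hfjval, hQval, hfval]
  exact hmain f.natDegree f le_rfl j

end MainAux

/-- For a limit key polynomial `Q_n` for `Ψ_n`:
`δ(Q) < δ(Q_n)` for every `Q ∈ Ψ_n`, and consequently `deg Q_n ≥ n`. -/
theorem delta_lt_delta_limitKeyPoly
    {K : Type*} [Field K] {Γ : Type*} [AddCommGroup Γ] [LinearOrder Γ] [IsOrderedAddMonoid Γ]
    (w : ValOn (Polynomial K) Γ)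
    (wbar : ValOn (Polynomial (AlgebraicClosure K)) Γ)
    (hbar : ∀ f : Polynomial K, wbar.v (f.map (algebraMap K (AlgebraicClosure K))) = w.v f)
    (n : ℕ) (hne : ∃ Q : Polynomial K, Q ∈ Psi wbar n)
    (hnomax : ∀ Q ∈ Psi wbar n, ∃ Q' ∈ Psi wbar n, w.v Q < w.v Q')
    (Qn : Polynomial K) (hQn : IsLimitKeyPoly w wbar n Qn) :
    (∀ Q ∈ Psi wbar n, delta wbar Q < delta wbar Qn) ∧ n ≤ Qn.natDegree := by
  obtain ⟨hQnmonic, hQnmem, hQnmin⟩ := hQn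
  have hfirst : ∀ Q ∈ Psi wbar n, delta wbar Q < delta wbar Qn := by
    intro Q hQmem
    have hQmem' : IsKeyPoly wbar Q ∧ Q.natDegree = n := hQmem
    rcases Nat.eq_zero_or_pos n with hn0 | hn
    · exfalso
      have hQ1 : Q = 1 :=
        hQmem'.1.1.natDegree_eq_zero.mp (by rw [hQmem'.2, hn0])
      have hlt := hQnmem Q hQmem
      rw [hQ1] at hlt
      have htop : truncVal w 1 Qn = ⊤ := by
        unfold truncVal
        refine le_antisymm le_top (Finset.le_inf' _ _ fun j hj => ?_)
        rw [one_pow, modByMonic_one, zero_mul, w.v_zero]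
      rw [htop] at hlt
      exact absurd hlt not_top_lt
    · by_contra hc
      push_neg at hc
      exact absurd (hQnmem Q hQmem)
        (not_lt.mpr (v_le_truncVal w wbar hbar hn hQmem Qn hc))
  refine ⟨hfirst, ?_⟩
  obtain ⟨Q, hQmem⟩ := hne
  have hQmem' : IsKeyPoly wbar Q ∧ Q.natDegree = n := hQmem
  have hdeg := hQmem'.1.2 Qn hQnmonic.ne_zero (le_of_lt (hfirst Q hQmem))
  have hnd := natDegree_le_natDegree hdeg
  rw [hQmem'.2] at hnd
  exact hnd
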